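/- Let N be a positive integer and define the directivity function D(x) = ‖∑_{n=0}^{N−1} exp(I·π·n·x)‖² for x ∈ ℝ. Let x, y be real numbers such that N(y − x)/2 is an integer and the distance from x to the set of even integers is at most the distance from y to the set of even integers. Then D(y) ≤ D(x). Moreover, if the distance from x to the set of even integers is strictly less than that of y and sin(Nπx/2) ≠ 0, then D(y) < D(x). -/
import Mathlib


open Complex Finset

/-- The antenna directivity function `D(x) = ‖∑_{n=0}^{N−1} exp(I·π·n·x)‖²` of a
half-wavelength uniform linear array with `N` elements. -/
noncomputable def directivity (N : ℕ) (x : ℝ) : ℝ :=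
  ‖∑ n ∈ Finset.range N, Complex.exp (Complex.I * (Real.pi : ℂ) * (n : ℂ) * (x : ℂ))‖ ^ 2

/-- The distance from a real number `z` to the set of even integers. -/
noncomputable def distToEven (z : ℝ) : ℝ := ⨅ k : ℤ, |z - 2 * (k : ℝ)|

lemma norm_exp_mul_I_sub_one (θ : ℝ) :
    ‖Complex.exp ((θ : ℂ) * I) - 1‖ = 2 * |Real.sin (θ / 2)| := by
  have hab : Complex.exp (((θ / 2 : ℝ) : ℂ) * I) * Complex.exp (-(((θ / 2 : ℝ) : ℂ) * I)) = 1 := by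
    rw [← Complex.exp_add]; simp
  have key : Complex.exp ((θ : ℂ) * I) - 1
      = Complex.exp (((θ / 2 : ℝ) : ℂ) * I) * (2 * I * Complex.sin ((θ / 2 : ℝ) : ℂ)) := by
    have hsin : Complex.sin ((θ / 2 : ℝ) : ℂ)
        = (Complex.exp (-(((θ / 2 : ℝ) : ℂ) * I)) - Complex.exp (((θ / 2 : ℝ) : ℂ) * I)) * I / 2 := by
      rw [Complex.sin]; ring_nf
    have hsq : Complex.exp ((θ : ℂ) * I)
        = Complex.exp (((θ / 2 : ℝ) : ℂ) * I) * Complex.exp (((θ / 2 : ℝ) : ℂ) * I) := by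
      rw [← Complex.exp_add]; congr 1; push_cast; ring
    rw [hsin, hsq]
    set a := Complex.exp (((θ / 2 : ℝ) : ℂ) * I)
    set b := Complex.exp (-(((θ / 2 : ℝ) : ℂ) * I))
    have hI : (I : ℂ) * I = -1 := Complex.I_mul_I
    calc a * a - 1 = a * a - a * b := by rw [hab]
      _ = a * (2 * I * ((b - a) * I / 2)) := by ring_nf; rw [Complex.I_sq]; ring
  rw [key, norm_mul]
  have h1 : ‖Complex.exp (((θ / 2 : ℝ) : ℂ) * I)‖ = 1 := Complex.norm_exp_ofReal_mul_I _
  rw [h1, one_mul]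
  have h2 : Complex.sin ((θ / 2 : ℝ) : ℂ) = ((Real.sin (θ / 2) : ℝ) : ℂ) :=
    (Complex.ofReal_sin _).symm
  rw [h2, norm_mul, norm_mul, Complex.norm_real]
  simp [Real.norm_eq_abs]

lemma directivity_eq (N : ℕ) (x : ℝ) (hx : Real.sin (Real.pi * x / 2) ≠ 0) :
    directivity N x
      = Real.sin ((N : ℝ) * Real.pi * x / 2) ^ 2 / Real.sin (Real.pi * x / 2) ^ 2 := by
  have hterm : ∀ n : ℕ, Complex.exp (Complex.I * (Real.pi : ℂ) * (n : ℂ) * (x : ℂ))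
      = Complex.exp (((Real.pi * x : ℝ) : ℂ) * I) ^ n := by
    intro n
    rw [← Complex.exp_nat_mul]
    congr 1
    push_cast
    ring
  have hr1 : Complex.exp (((Real.pi * x : ℝ) : ℂ) * I) ≠ 1 := by
    intro h
    have h0 := norm_exp_mul_I_sub_one (Real.pi * x)
    rw [h, sub_self, norm_zero] at h0
    have : |Real.sin (Real.pi * x / 2)| = 0 := by linarith
    exact hx (abs_eq_zero.mp this)
  have hrN : Complex.exp (((Real.pi * x : ℝ) : ℂ) * I) ^ N
      = Complex.exp ((((N : ℝ) * Real.pi * x : ℝ) : ℂ) * I) := by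
    rw [← Complex.exp_nat_mul]
    congr 1
    push_cast
    ring
  unfold directivity
  simp_rw [hterm]
  rw [geom_sum_eq hr1, norm_div, hrN, norm_exp_mul_I_sub_one, norm_exp_mul_I_sub_one]
  rw [div_pow, mul_pow, mul_pow, _root_.sq_abs, _root_.sq_abs]
  rw [mul_div_mul_left _ _ (by norm_num : (2 : ℝ) ^ 2 ≠ 0)]

lemma directivity_le_sq (N : ℕ) (x : ℝ) : directivity N x ≤ (N : ℝ) ^ 2 := by
  have h : ‖∑ n ∈ Finset.range N, Complex.exp (Complex.I * (Real.pi : ℂ) * (n : ℂ) * (x : ℂ))‖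
      ≤ (N : ℝ) := by
    calc ‖∑ n ∈ Finset.range N, Complex.exp (Complex.I * (Real.pi : ℂ) * (n : ℂ) * (x : ℂ))‖
        ≤ ∑ n ∈ Finset.range N,
            ‖Complex.exp (Complex.I * (Real.pi : ℂ) * (n : ℂ) * (x : ℂ))‖ := norm_sum_le _ _
      _ = ∑ n ∈ Finset.range N, (1 : ℝ) := by
          refine Finset.sum_congr rfl fun n _ => ?_
          rw [show Complex.I * (Real.pi : ℂ) * (n : ℂ) * (x : ℂ)
              = ((Real.pi * n * x : ℝ) : ℂ) * I by push_cast; ring]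
          exact Complex.norm_exp_ofReal_mul_I _
      _ = (N : ℝ) := by simp
  exact pow_le_pow_left₀ (norm_nonneg _) h 2

lemma directivity_of_sin_zero (N : ℕ) {x : ℝ} (hx : Real.sin (Real.pi * x / 2) = 0) :
    directivity N x = (N : ℝ) ^ 2 := by
  obtain ⟨k, hk⟩ := Real.sin_eq_zero_iff.mp hx
  have hx2 : x = 2 * (k : ℝ) := by
    have hpi := Real.pi_ne_zero
    exact mul_left_cancel₀ hpi (by linear_combination -2 * hk)
  have hterm : ∀ n : ℕ, Complex.exp (Complex.I * (Real.pi : ℂ) * (n : ℂ) * (x : ℂ)) = 1 := by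
    intro n
    rw [show Complex.I * (Real.pi : ℂ) * (n : ℂ) * (x : ℂ)
        = (((n : ℤ) * k : ℤ) : ℂ) * (2 * (Real.pi : ℂ) * I) by rw [hx2]; push_cast; ring]
    exact Complex.exp_int_mul_two_pi_mul_I _
  unfold directivity
  simp [hterm]

lemma abs_sub_round_le (u : ℝ) (k : ℤ) : |u - round u| ≤ |u - (k : ℝ)| := by
  rcases eq_or_ne k (round u) with h | h
  · rw [h]
  · have h1 : (1 : ℝ) ≤ |(round u : ℝ) - (k : ℝ)| := by
      rw [← Int.cast_sub, ← Int.cast_abs]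
      exact_mod_cast Int.one_le_abs (sub_ne_zero.mpr (Ne.symm h))
    have h2 := abs_sub_round u
    have h3 : |(round u : ℝ) - (k : ℝ)| ≤ |(round u : ℝ) - u| + |u - (k : ℝ)| :=
      abs_sub_le _ _ _
    have h4 : |(round u : ℝ) - u| = |u - round u| := abs_sub_comm _ _
    linarith

lemma distToEven_eq (z : ℝ) : distToEven z = |z - 2 * (round (z / 2) : ℝ)| := by
  unfold distToEven
  apply le_antisymm
  · exact ciInf_le ⟨0, by rintro w ⟨k, rfl⟩; exact abs_nonneg _⟩ _
  · apply le_ciInf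
    intro k
    have h := abs_sub_round_le (z / 2) k
    have e1 : |z - 2 * (round (z / 2) : ℝ)| = 2 * |z / 2 - round (z / 2)| := by
      rw [show z - 2 * (round (z / 2) : ℝ) = 2 * (z / 2 - round (z / 2)) by ring, abs_mul,
        _root_.abs_two]
    have e2 : |z - 2 * (k : ℝ)| = 2 * |z / 2 - (k : ℝ)| := by
      rw [show z - 2 * (k : ℝ) = 2 * (z / 2 - (k : ℝ)) by ring, abs_mul, _root_.abs_two]
    rw [e1, e2]
    linarith

lemma distToEven_nonneg (z : ℝ) : 0 ≤ distToEven z := by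
  rw [distToEven_eq]; exact abs_nonneg _

lemma distToEven_le_one (z : ℝ) : distToEven z ≤ 1 := by
  rw [distToEven_eq]
  have h := abs_sub_round (z / 2)
  have e1 : |z - 2 * (round (z / 2) : ℝ)| = 2 * |z / 2 - round (z / 2)| := by
    rw [show z - 2 * (round (z / 2) : ℝ) = 2 * (z / 2 - round (z / 2)) by ring, abs_mul, _root_.abs_two]
  linarith

lemma abs_sin_eq (z : ℝ) :
    |Real.sin (Real.pi * z / 2)| = Real.sin (Real.pi * distToEven z / 2) := by
  set k := round (z / 2) with hk
  have hd : distToEven z = |z - 2 * (k : ℝ)| := distToEven_eq z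
  set t := z - 2 * (k : ℝ) with ht
  have h1 : Real.pi * z / 2 = Real.pi * t / 2 + (k : ℝ) * Real.pi := by rw [ht]; ring
  rw [h1, Real.sin_add_int_mul_pi, abs_mul]
  have h2 : |((-1 : ℝ)) ^ k| = 1 := by
    rcases Int.even_or_odd k with h | h
    · rw [h.neg_one_zpow, abs_one]
    · rw [h.neg_one_zpow, abs_neg, abs_one]
  rw [h2, one_mul]
  have habs : |Real.sin (Real.pi * t / 2)| = |Real.sin (Real.pi * |t| / 2)| := by
    rcases abs_cases t with ⟨h, _⟩ | ⟨h, _⟩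
    · rw [h]
    · rw [h, show Real.pi * (-t) / 2 = -(Real.pi * t / 2) by ring, Real.sin_neg, abs_neg]
  rw [habs, hd]
  have ht1 : |t| ≤ 1 := hd ▸ distToEven_le_one z
  have hpi := Real.pi_pos
  refine abs_of_nonneg (Real.sin_nonneg_of_nonneg_of_le_pi ?_ ?_)
  · positivity
  · nlinarith [abs_nonneg t]

lemma sin_dist_mono {a b : ℝ} (ha : 0 ≤ a) (hb : b ≤ 1) (hab : a ≤ b) :
    Real.sin (Real.pi * a / 2) ≤ Real.sin (Real.pi * b / 2) := by
  have hpi := Real.pi_pos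
  rcases eq_or_lt_of_le hab with rfl | hlt
  · exact le_rfl
  · exact le_of_lt (Real.strictMonoOn_sin
      ⟨by nlinarith, by nlinarith⟩ ⟨by nlinarith, by nlinarith⟩ (by nlinarith))

lemma sin_dist_strict_mono {a b : ℝ} (ha : 0 ≤ a) (hb : b ≤ 1) (hab : a < b) :
    Real.sin (Real.pi * a / 2) < Real.sin (Real.pi * b / 2) := by
  have hpi := Real.pi_pos
  exact Real.strictMonoOn_sin
    ⟨by nlinarith, by nlinarith⟩ ⟨by nlinarith, by nlinarith⟩ (by nlinarith)

/-- **Monotonicity of directivity in the folded angular misalignment.**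
Let `N > 0` and `x, y : ℝ` with `N(y − x)/2 ∈ ℤ` and the distance from `x` to the even
integers at most that of `y`. Then `D(y) ≤ D(x)`; moreover, if the distance of `x` to the
even integers is strictly smaller than that of `y` and `sin(Nπx/2) ≠ 0`, then `D(y) < D(x)`. -/
theorem directivity_monotone (N : ℕ) (hN : 0 < N) (x y : ℝ)
    (hshift : ∃ m : ℤ, (N : ℝ) * (y - x) / 2 = (m : ℝ))
    (hle : distToEven x ≤ distToEven y) :
    directivity N y ≤ directivity N x ∧
      (distToEven x < distToEven y → Real.sin ((N : ℝ) * Real.pi * x / 2) ≠ 0 →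
        directivity N y < directivity N x) := by
  obtain ⟨m, hm⟩ := hshift
  have hnum : Real.sin ((N : ℝ) * Real.pi * y / 2) ^ 2
      = Real.sin ((N : ℝ) * Real.pi * x / 2) ^ 2 := by
    have hang : (N : ℝ) * Real.pi * y / 2 = (N : ℝ) * Real.pi * x / 2 + (m : ℝ) * Real.pi := by
      linear_combination Real.pi * hm
    rw [hang, Real.sin_add_int_mul_pi, mul_pow, ← _root_.sq_abs ((-1 : ℝ) ^ m),
      show |((-1:ℝ))^m| = 1 by
        rcases Int.even_or_odd m with h | h
        · rw [h.neg_one_zpow, abs_one]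
        · rw [h.neg_one_zpow, abs_neg, abs_one], one_pow, one_mul]
  have hax := abs_sin_eq x
  have hay := abs_sin_eq y
  have hmono : |Real.sin (Real.pi * x / 2)| ≤ |Real.sin (Real.pi * y / 2)| := by
    rw [hax, hay]
    exact sin_dist_mono (distToEven_nonneg x) (distToEven_le_one y) hle
  by_cases hx0 : Real.sin (Real.pi * x / 2) = 0
  · have hDx : directivity N x = (N : ℝ) ^ 2 := directivity_of_sin_zero N hx0
    refine ⟨hDx ▸ directivity_le_sq N y, fun _ hsN => absurd ?_ hsN⟩
    obtain ⟨k, hk⟩ := Real.sin_eq_zero_iff.mp hx0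
    have hx2 : x = 2 * (k : ℝ) := by
      have hpi := Real.pi_ne_zero
      exact mul_left_cancel₀ hpi (by linear_combination -2 * hk)
    rw [show (N : ℝ) * Real.pi * x / 2 = (((N : ℤ) * k : ℤ) : ℝ) * Real.pi by
      rw [hx2]; push_cast; ring]
    exact Real.sin_int_mul_pi _
  · have hy0 : Real.sin (Real.pi * y / 2) ≠ 0 := by
      intro h
      rw [h, abs_zero] at hmono
      exact hx0 (abs_eq_zero.mp (le_antisymm hmono (abs_nonneg _)))
    rw [directivity_eq N x hx0, directivity_eq N y hy0, hnum]
    have hdx2 : 0 < Real.sin (Real.pi * x / 2) ^ 2 := by positivity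
    have hdy2 : 0 < Real.sin (Real.pi * y / 2) ^ 2 := by positivity
    have hle2 : Real.sin (Real.pi * x / 2) ^ 2 ≤ Real.sin (Real.pi * y / 2) ^ 2 := by
      rw [← _root_.sq_abs (Real.sin (Real.pi * x / 2)),
        ← _root_.sq_abs (Real.sin (Real.pi * y / 2))]
      exact pow_le_pow_left₀ (abs_nonneg _) hmono 2
    refine ⟨div_le_div_of_nonneg_left (sq_nonneg _) hdx2 hle2, fun hlt hsN => ?_⟩
    have hstrict : Real.sin (Real.pi * x / 2) ^ 2 < Real.sin (Real.pi * y / 2) ^ 2 := by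
      rw [← _root_.sq_abs (Real.sin (Real.pi * x / 2)),
        ← _root_.sq_abs (Real.sin (Real.pi * y / 2))]
      refine pow_lt_pow_left₀ ?_ (abs_nonneg _) (by norm_num)
      rw [hax, hay]
      exact sin_dist_strict_mono (distToEven_nonneg x) (distToEven_le_one y) hlt
    exact div_lt_div_of_pos_left (by positivity) hdx2 hstrict
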